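/- Let q = 2^m with m even, m ≥ 4. Then the incidence structure (U_{q+1}, B_{σ_{5,2},q+1}), where B_{σ_{5,2},q+1} is the set of 5-subsets B of U_{q+1} with σ_{5,2}(B) = 0, is a Steiner system S(3, 5, q+1): every 3-subset of U_{q+1} lies in exactly one such 5-subset. -/

import Mathlib

open Finset

set_option maxHeartbeats 1600000

/-- The `l`-th elementary symmetric polynomial evaluated on a finite set `B`. -/
noncomputable def esym {F : Type*} [CommRing F] (B : Finset F) (l : ℕ) : F :=
  ∑ s ∈ B.powersetCard l, ∏ x ∈ s, x

/-- The set of `n`-th roots of unity. -/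
def rootsSet (F : Type*) [Monoid F] (n : ℕ) : Set F := {u | u ^ n = 1}

section EsymLemmas

variable {F : Type*} [CommRing F] [DecidableEq F]

lemma esym_zero' (S : Finset F) : esym S 0 = 1 := by
  simp [esym]

lemma esym_eq_zero_of_card_lt (S : Finset F) (k : ℕ) (h : S.card < k) : esym S k = 0 := by
  unfold esym
  rw [Finset.powersetCard_eq_empty.mpr h, Finset.sum_empty]

lemma esym_insert (u : F) (S : Finset F) (hu : u ∉ S) (n : ℕ) :
    esym (insert u S) (n + 1) = esym S (n + 1) + u * esym S n := by
  have hdisj : Disjoint (Finset.powersetCard (n + 1) S)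
      ((Finset.powersetCard n S).image (insert u)) := by
    rw [Finset.disjoint_left]
    intro T hT hT'
    rw [Finset.mem_powersetCard] at hT
    obtain ⟨T', _, rfl⟩ := Finset.mem_image.mp hT'
    exact hu (hT.1 (Finset.mem_insert_self u T'))
  unfold esym
  rw [Finset.powersetCard_succ_insert hu n, Finset.sum_union hdisj]
  congr 1
  rw [Finset.sum_image]
  · rw [Finset.mul_sum]
    apply Finset.sum_congr rfl
    intro T hT
    rw [Finset.mem_powersetCard] at hT
    have huT : u ∉ T := fun h => hu (hT.1 h)
    rw [Finset.prod_insert huT]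
  · intro T hT T' hT' h
    rw [Finset.mem_coe, Finset.mem_powersetCard] at hT hT'
    have h1 : u ∉ T := fun hh => hu (hT.1 hh)
    have h2 : u ∉ T' := fun hh => hu (hT'.1 hh)
    have h3 := congrArg (fun (s : Finset F) => s.erase u) h
    simpa [Finset.erase_insert h1, Finset.erase_insert h2] using h3

lemma esym_five (a b c x y : F)
    (hab : a ≠ b) (hac : a ≠ c) (hax : a ≠ x) (hay : a ≠ y)
    (hbc : b ≠ c) (hbx : b ≠ x) (hby : b ≠ y)
    (hcx : c ≠ x) (hcy : c ≠ y) (hxy : x ≠ y) :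
    esym ({a, b, c, x, y} : Finset F) 2 =
      x * y + c * (x + y) + b * (c + x + y) + a * (b + c + x + y) := by
  have hy1 : esym ({y} : Finset F) 1 = y := by
    rw [show ({y} : Finset F) = insert y ∅ from rfl,
      esym_insert y ∅ (Finset.notMem_empty y) 0, esym_zero',
      esym_eq_zero_of_card_lt _ _ (by simp)]
    ring
  have hxy1 : esym ({x, y} : Finset F) 1 = x + y := by
    rw [show ({x, y} : Finset F) = insert x {y} from rfl,
      esym_insert x {y} (by simp [hxy]) 0, hy1, esym_zero']
    ring
  have hxy2 : esym ({x, y} : Finset F) 2 = x * y := by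
    rw [show ({x, y} : Finset F) = insert x {y} from rfl,
      esym_insert x {y} (by simp [hxy]) 1, hy1,
      esym_eq_zero_of_card_lt _ _ (by simp)]
    ring
  have hc1 : esym ({c, x, y} : Finset F) 1 = c + (x + y) := by
    rw [show ({c, x, y} : Finset F) = insert c {x, y} from rfl,
      esym_insert c {x, y} (by simp [hcx, hcy]) 0, hxy1, esym_zero']
    ring
  have hc2 : esym ({c, x, y} : Finset F) 2 = x * y + c * (x + y) := by
    rw [show ({c, x, y} : Finset F) = insert c {x, y} from rfl,
      esym_insert c {x, y} (by simp [hcx, hcy]) 1, hxy2, hxy1]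
  have hb1 : esym ({b, c, x, y} : Finset F) 1 = b + (c + (x + y)) := by
    rw [show ({b, c, x, y} : Finset F) = insert b {c, x, y} from rfl,
      esym_insert b {c, x, y} (by simp [hbc, hbx, hby]) 0, hc1, esym_zero']
    ring
  have hb2 : esym ({b, c, x, y} : Finset F) 2
      = x * y + c * (x + y) + b * (c + x + y) := by
    rw [show ({b, c, x, y} : Finset F) = insert b {c, x, y} from rfl,
      esym_insert b {c, x, y} (by simp [hbc, hbx, hby]) 1, hc2, hc1]
    ring
  rw [show ({a, b, c, x, y} : Finset F) = insert a {b, c, x, y} from rfl,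
    esym_insert a {b, c, x, y} (by simp [hab, hac, hax, hay]) 1, hb2, hb1]
  ring

end EsymLemmas

theorem steiner_key (F : Type*) [Field F] [Fintype F] [CharP F 2] (m : ℕ) (hm : 4 ≤ m)
    (heven : Even m) (hcard : Fintype.card F = 2 ^ (2 * m))
    (E : Finset F) (hEU : ↑E ⊆ rootsSet F (2 ^ m + 1)) (hE : E.card = 3) :
    {B : Finset F | ↑B ⊆ rootsSet F (2 ^ m + 1) ∧ B.card = 5 ∧
      esym B 2 = 0 ∧ E ⊆ B}.ncard = 1 := by
  classical
  have h2 : (2 : F) = 0 := by exact_mod_cast CharP.cast_eq_zero F 2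
  set Q : ℕ := 2 ^ m with hQdef
  have hQpos : 0 < Q := by positivity
  have hQ0 : Q ≠ 0 := hQpos.ne'
  have hfrob : ∀ u v : F, (u + v) ^ Q = u ^ Q + v ^ Q := fun u v =>
    add_pow_char_pow u v 2 m
  -- Q ≡ 1 (mod 3)
  have hQmod : Q % 3 = 1 := by
    obtain ⟨k, hk⟩ := heven
    have h4k : Q = 4 ^ k := by
      rw [hQdef, hk, show k + k = 2 * k by ring, pow_mul]
      norm_num
    have h3 : (3 : ℕ) ∣ Q - 1 := by
      have := Nat.sub_dvd_pow_sub_pow 4 1 k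
      simpa [h4k] using this
    omega
  -- extract the three points of E
  obtain ⟨a, b, c, hab, hac, hbc, hE3⟩ := Finset.card_eq_three.mp hE
  have haU : a ^ (Q + 1) = 1 := hEU (Finset.mem_coe.mpr (by rw [hE3]; simp))
  have hbU : b ^ (Q + 1) = 1 := hEU (Finset.mem_coe.mpr (by rw [hE3]; simp))
  have hcU : c ^ (Q + 1) = 1 := hEU (Finset.mem_coe.mpr (by rw [hE3]; simp))
  have hne0 : ∀ u : F, u ^ (Q + 1) = 1 → u ≠ 0 := by
    intro u hu h0
    rw [h0, zero_pow (Nat.succ_ne_zero Q)] at hu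
    exact zero_ne_one hu
  have ha0 : a ≠ 0 := hne0 a haU
  have hb0 : b ≠ 0 := hne0 b hbU
  have hc0 : c ≠ 0 := hne0 c hcU
  have hA : a ^ Q * a = 1 := by rw [← pow_succ]; exact haU
  have hB : b ^ Q * b = 1 := by rw [← pow_succ]; exact hbU
  have hC : c ^ Q * c = 1 := by rw [← pow_succ]; exact hcU
  -- sums of a pair of distinct elements are nonzero (char 2)
  have hsum_ne : ∀ u v : F, u ≠ v → u + v ≠ 0 := by
    intro u v huv h
    exact huv (by linear_combination h - v * h2)
  -- Frobenius facts
  have E4 : ((a + b + c) * (a*b + a*c + b*c) + a*b*c) ^ Q * ((a*b*c) * (a*b*c))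
      = (a + b + c) * (a*b + a*c + b*c) + a*b*c := by
    simp only [hfrob, mul_pow]
    linear_combination (b*c^2 + b^2*c + a*b^2*c^2*(c^Q)^2 + 4*a*b^2*c^2*(b^Q)*(c^Q) + a*b^2*c^2*(b^Q)^2 + a*b^2*c^2*(a^Q)*(c^Q) + a*b^2*c^2*(a^Q)*(b^Q))*hA + (a*c^2 + 4*a*b*c^2*(c^Q) + a*b*c^2*(b^Q) + a*b*c^2*(a^Q) + a^2*c + a^2*b*c^2*(c^Q)^2 + a^2*b*c^2*(b^Q)*(c^Q))*hB + (4*a*b*c + a*b^2 + a*b^2*c*(c^Q) + a*b^2*c*(a^Q) + a^2*b + a^2*b*c*(c^Q) + a^2*b*c*(b^Q))*hC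
  have E5 : ((a + b + c) * (a + b + c) + (a*b + a*c + b*c)) ^ Q * ((a*b*c) * (a*b*c))
      = (a*b + a*c + b*c) * (a*b + a*c + b*c) + (a + b + c) * (a*b*c) := by
    simp only [hfrob, mul_pow]
    linear_combination (b^2*c^2 + 3*a*b^2*c^2*(c^Q) + 3*a*b^2*c^2*(b^Q) + a*b^2*c^2*(a^Q))*hA + (3*a*b*c^2 + a^2*c^2 + 3*a^2*b*c^2*(c^Q) + a^2*b*c^2*(b^Q))*hB + (3*a*b^2*c + 3*a^2*b*c + a^2*b^2 + a^2*b^2*c*(c^Q))*hC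
  have E6 : (a*a*c + a*b*b + b*c*c + a*b*c) ^ Q * ((a*b*c) * (a*b*c))
      = (a*a*c + a*b*b + b*c*c + a*b*c)
        + ((a + b + c) * (a*b + a*c + b*c) + a*b*c) := by
    simp only [hfrob, mul_pow]
    linear_combination (b^2*c + a*b^2*c^2*(b^Q)*(c^Q) + a*b^2*c^2*(b^Q)^2 + a*b^2*c^2*(a^Q)*(c^Q))*hA + (a*c^2 + a*b*c^2*(c^Q) + a*b*c^2*(b^Q) + a^2*b*c^2*(c^Q)^2)*hB + (a*b*c + a*b^2*c*(a^Q) + a^2*b + a^2*b*c*(c^Q))*hC + (- b*c^2 - 2*a*b*c - a*b^2 - a^2*c)*h2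
  -- nonvanishing of W
  have hPne : a*b*c ≠ 0 := mul_ne_zero (mul_ne_zero ha0 hb0) hc0
  have hP2ne : (a*b*c) * (a*b*c) ≠ 0 := mul_ne_zero hPne hPne
  have hWfact : (a + b + c) * (a*b + a*c + b*c) + a*b*c = (a+b) * (a+c) * (b+c) := by
    linear_combination (a*b*c) * h2
  have hWne : (a + b + c) * (a*b + a*c + b*c) + a*b*c ≠ 0 := by
    rw [hWfact]
    exact mul_ne_zero (mul_ne_zero (hsum_ne a b hab) (hsum_ne a c hac)) (hsum_ne b c hbc)
  -- nonvanishing of D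
  have hDDne : (a + b + c) * (a + b + c) + (a*b + a*c + b*c) ≠ 0 := by
    intro hDD0
    have hCC0 : (a*b + a*c + b*c) * (a*b + a*c + b*c) + (a + b + c) * (a*b*c) = 0 := by
      rw [← E5, hDD0, zero_pow hQ0, zero_mul]
    by_cases hs : a + b + c = 0
    · have ht0 : a*b + a*c + b*c = 0 := by linear_combination hDD0 - (a + b + c) * hs
      have h3eq : a ^ 3 = b ^ 3 := by
        linear_combination ((a - b) * (a + b)) * hs - (a - b) * ht0
      have hν3 : (b / a) ^ 3 = 1 := by
        rw [div_pow, ← h3eq, div_self (pow_ne_zero 3 ha0)]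
      have hνQ : (b / a) ^ (Q + 1) = 1 := by
        rw [div_pow, haU, hbU]
        norm_num
      have hd1 : orderOf (b / a) ∣ 3 := orderOf_dvd_of_pow_eq_one hν3
      have hd2 : orderOf (b / a) ∣ Q + 1 := orderOf_dvd_of_pow_eq_one hνQ
      have hgcd : Nat.gcd 3 (Q + 1) = 1 := by
        have h3d : ¬ (3 ∣ Q + 1) := by omega
        exact (Nat.Prime.coprime_iff_not_dvd Nat.prime_three).mpr h3d
      have : orderOf (b / a) ∣ 1 := hgcd ▸ Nat.dvd_gcd hd1 hd2
      have hba1 : b / a = 1 := orderOf_eq_one_iff.mp (Nat.dvd_one.mp this)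
      exact hab ((div_eq_one_iff_eq ha0).mp hba1).symm
    · have hT' : a*b + a*c + b*c = (a + b + c) ^ 2 := by
        linear_combination hDD0 - (a + b + c) ^ 2 * h2
      have hP' : a*b*c = (a + b + c) ^ 3 := by
        apply mul_left_cancel₀ hs
        linear_combination hCC0 - ((a*b + a*c + b*c) + (a + b + c) ^ 2) * hT'
          - (a + b + c) ^ 4 * h2
      have hfoo : (a + (a + b + c)) ^ 3 = 0 := by
        linear_combination (a*(a+b)*(a+c) + a^2*(a+b+c) + a*(a+b+c)^2) * h2
          - a * hT' - hP'
      have h0 : a + (a + b + c) = 0 := pow_eq_zero_iff (three_ne_zero) |>.mp hfoo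
      exact hbc (by linear_combination h0 - (a + c) * h2)
  have hCCne : (a*b + a*c + b*c) * (a*b + a*c + b*c) + (a + b + c) * (a*b*c) ≠ 0 := by
    rw [← E5]
    exact mul_ne_zero (pow_ne_zero Q hDDne) hP2ne
  -- a primitive cube root of unity
  have h3dvd : (3 : ℕ) ∣ Fintype.card Fˣ := by
    rw [Fintype.card_units, hcard]
    have h4 : (2 : ℕ) ^ (2 * m) = 4 ^ m := by rw [pow_mul]; norm_num
    rw [h4]
    simpa using Nat.sub_dvd_pow_sub_pow 4 1 m
  haveI : Fact (Nat.Prime 3) := ⟨by norm_num⟩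
  obtain ⟨u, hu⟩ := exists_prime_orderOf_dvd_card 3 h3dvd
  have hu3 : u ^ 3 = 1 := hu ▸ pow_orderOf_eq_one u
  obtain ⟨ω, hωdef⟩ : ∃ z : F, z = (u : F) := ⟨_, rfl⟩
  have hω3 : ω ^ 3 = 1 := by
    rw [hωdef, ← Units.val_pow_eq_pow_val, hu3, Units.val_one]
  have hωne1 : ω ≠ 1 := by
    intro h
    have hu1 : u = 1 := Units.ext (by rw [← hωdef, h, Units.val_one])
    rw [hu1, orderOf_one] at hu
    norm_num at hu
  have hωeq : ω ^ 2 + ω + 1 = 0 := by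
    have hfac : (ω - 1) * (ω ^ 2 + ω + 1) = 0 := by linear_combination hω3
    rcases mul_eq_zero.mp hfac with h | h
    · exact absurd (by linear_combination h) hωne1
    · exact h
  have hωQ : ω ^ Q = ω := by
    obtain ⟨t, ht⟩ : ∃ t, Q = 3 * t + 1 := ⟨Q / 3, by omega⟩
    rw [ht, pow_add, pow_mul, hω3, one_pow, one_mul, pow_one]
  -- the identity G² + G·W = C·D + W²
  have hI2 : (a*a*c + a*b*b + b*c*c + a*b*c) * (a*a*c + a*b*b + b*c*c + a*b*c)
      + (a*a*c + a*b*b + b*c*c + a*b*c) * ((a + b + c) * (a*b + a*c + b*c) + a*b*c)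
      = ((a*b + a*c + b*c) * (a*b + a*c + b*c) + (a + b + c) * (a*b*c))
        * ((a + b + c) * (a + b + c) + (a*b + a*c + b*c))
        + ((a + b + c) * (a*b + a*c + b*c) + a*b*c)
          * ((a + b + c) * (a*b + a*c + b*c) + a*b*c) := by
    linear_combination (- 2*b^3*c^3 - b^4*c^2 - 2*a*b*c^4 - 9*a*b^2*c^3 - 10*a*b^3*c^2 - 2*a*b^4*c - a^2*c^4 - 10*a^2*b*c^3 - 22*a^2*b^2*c^2 - 9*a^2*b^3*c - 2*a^3*c^3 - 9*a^3*b*c^2 - 10*a^3*b^2*c - 2*a^3*b^3 - 2*a^4*b*c - a^4*b^2)*h2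
  -- the two new points
  obtain ⟨x1, hx1def⟩ : ∃ z : F, z = ((a*a*c + a*b*b + b*c*c + a*b*c)
      + ω * ((a + b + c) * (a*b + a*c + b*c) + a*b*c))
      / ((a + b + c) * (a + b + c) + (a*b + a*c + b*c)) := ⟨_, rfl⟩
  obtain ⟨x2, hx2def⟩ : ∃ z : F, z = ((a*a*c + a*b*b + b*c*c + a*b*c)
      + (ω + 1) * ((a + b + c) * (a*b + a*c + b*c) + a*b*c))
      / ((a + b + c) * (a + b + c) + (a*b + a*c + b*c)) := ⟨_, rfl⟩
  have hx1 : x1 * ((a + b + c) * (a + b + c) + (a*b + a*c + b*c))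
      = (a*a*c + a*b*b + b*c*c + a*b*c)
        + ω * ((a + b + c) * (a*b + a*c + b*c) + a*b*c) := by
    rw [hx1def, div_mul_cancel₀ _ hDDne]
  have hx2 : x2 * ((a + b + c) * (a + b + c) + (a*b + a*c + b*c))
      = (a*a*c + a*b*b + b*c*c + a*b*c)
        + (ω + 1) * ((a + b + c) * (a*b + a*c + b*c) + a*b*c) := by
    rw [hx2def, div_mul_cancel₀ _ hDDne]
  have hKP : ((a*a*c + a*b*b + b*c*c + a*b*c)
      + ω * ((a + b + c) * (a*b + a*c + b*c) + a*b*c))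
      * ((a*a*c + a*b*b + b*c*c + a*b*c)
      + (ω + 1) * ((a + b + c) * (a*b + a*c + b*c) + a*b*c))
      = ((a*b + a*c + b*c) * (a*b + a*c + b*c) + (a + b + c) * (a*b*c))
        * ((a + b + c) * (a + b + c) + (a*b + a*c + b*c)) := by
    linear_combination hI2
      + ((a + b + c) * (a*b + a*c + b*c) + a*b*c) ^ 2 * hωeq
      + (ω * (a*a*c + a*b*b + b*c*c + a*b*c)
          * ((a + b + c) * (a*b + a*c + b*c) + a*b*c)) * h2
  have hsum12 : (x1 + x2) * ((a + b + c) * (a + b + c) + (a*b + a*c + b*c))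
      = (a + b + c) * (a*b + a*c + b*c) + a*b*c := by
    linear_combination hx1 + hx2 + ((a*a*c + a*b*b + b*c*c + a*b*c)
      + ω * ((a + b + c) * (a*b + a*c + b*c) + a*b*c)) * h2
  have hprod12 : (x1 * x2) * ((a + b + c) * (a + b + c) + (a*b + a*c + b*c))
      = (a*b + a*c + b*c) * (a*b + a*c + b*c) + (a + b + c) * (a*b*c) := by
    apply mul_right_cancel₀ hDDne
    linear_combination (x2 * ((a + b + c) * (a + b + c) + (a*b + a*c + b*c))) * hx1
      + ((a*a*c + a*b*b + b*c*c + a*b*c)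
          + ω * ((a + b + c) * (a*b + a*c + b*c) + a*b*c)) * hx2
      + hKP
  have hx1x2ne : x1 ≠ x2 := by
    intro h
    apply hWne
    rw [h] at hx1
    linear_combination hx1 - hx2
  -- expanded Frobenius identities
  have E4x : ((a^Q + b^Q + c^Q) * (a^Q*b^Q + a^Q*c^Q + b^Q*c^Q) + a^Q*b^Q*c^Q)
      * ((a*b*c) * (a*b*c))
      = (a + b + c) * (a*b + a*c + b*c) + a*b*c := by
    linear_combination (b*c^2 + b^2*c + a*b^2*c^2*(c^Q)^2 + 4*a*b^2*c^2*(b^Q)*(c^Q) + a*b^2*c^2*(b^Q)^2 + a*b^2*c^2*(a^Q)*(c^Q) + a*b^2*c^2*(a^Q)*(b^Q))*hA + (a*c^2 + 4*a*b*c^2*(c^Q) + a*b*c^2*(b^Q) + a*b*c^2*(a^Q) + a^2*c + a^2*b*c^2*(c^Q)^2 + a^2*b*c^2*(b^Q)*(c^Q))*hB + (4*a*b*c + a*b^2 + a*b^2*c*(c^Q) + a*b^2*c*(a^Q) + a^2*b + a^2*b*c*(c^Q) + a^2*b*c*(b^Q))*hC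
  have E5x : ((a^Q + b^Q + c^Q) * (a^Q + b^Q + c^Q) + (a^Q*b^Q + a^Q*c^Q + b^Q*c^Q))
      * ((a*b*c) * (a*b*c))
      = (a*b + a*c + b*c) * (a*b + a*c + b*c) + (a + b + c) * (a*b*c) := by
    linear_combination (b^2*c^2 + 3*a*b^2*c^2*(c^Q) + 3*a*b^2*c^2*(b^Q) + a*b^2*c^2*(a^Q))*hA + (3*a*b*c^2 + a^2*c^2 + 3*a^2*b*c^2*(c^Q) + a^2*b*c^2*(b^Q))*hB + (3*a*b^2*c + 3*a^2*b*c + a^2*b^2 + a^2*b^2*c*(c^Q))*hC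
  have E6x : (a^Q*a^Q*c^Q + a^Q*b^Q*b^Q + b^Q*c^Q*c^Q + a^Q*b^Q*c^Q)
      * ((a*b*c) * (a*b*c))
      = (a*a*c + a*b*b + b*c*c + a*b*c)
        + ((a + b + c) * (a*b + a*c + b*c) + a*b*c) := by
    linear_combination (b^2*c + a*b^2*c^2*(b^Q)*(c^Q) + a*b^2*c^2*(b^Q)^2 + a*b^2*c^2*(a^Q)*(c^Q))*hA + (a*c^2 + a*b*c^2*(c^Q) + a*b*c^2*(b^Q) + a^2*b*c^2*(c^Q)^2)*hB + (a*b*c + a*b^2*c*(a^Q) + a^2*b + a^2*b*c*(c^Q))*hC + (- b*c^2 - 2*a*b*c - a*b^2 - a^2*c)*h2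
  -- x1, x2 are roots of unity
  have hx1Q : x1 ^ Q * ((a*b + a*c + b*c) * (a*b + a*c + b*c) + (a + b + c) * (a*b*c))
      = x1 * ((a + b + c) * (a + b + c) + (a*b + a*c + b*c))
        + ((a + b + c) * (a*b + a*c + b*c) + a*b*c) := by
    have e1 : (x1 * ((a + b + c) * (a + b + c) + (a*b + a*c + b*c))) ^ Q
        * ((a*b*c) * (a*b*c))
        = ((a*a*c + a*b*b + b*c*c + a*b*c)
          + ω * ((a + b + c) * (a*b + a*c + b*c) + a*b*c)) ^ Q
          * ((a*b*c) * (a*b*c)) := by rw [hx1]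
    simp only [hfrob, mul_pow, hωQ] at e1
    linear_combination e1 - x1 ^ Q * E5x + E6x + ω * E4x - hx1
  have hx2Q : x2 ^ Q * ((a*b + a*c + b*c) * (a*b + a*c + b*c) + (a + b + c) * (a*b*c))
      = x2 * ((a + b + c) * (a + b + c) + (a*b + a*c + b*c))
        + ((a + b + c) * (a*b + a*c + b*c) + a*b*c) := by
    have e1 : (x2 * ((a + b + c) * (a + b + c) + (a*b + a*c + b*c))) ^ Q
        * ((a*b*c) * (a*b*c))
        = ((a*a*c + a*b*b + b*c*c + a*b*c)
          + (ω + 1) * ((a + b + c) * (a*b + a*c + b*c) + a*b*c)) ^ Q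
          * ((a*b*c) * (a*b*c)) := by rw [hx2]
    simp only [hfrob, mul_pow, hωQ, one_pow] at e1
    linear_combination e1 - x2 ^ Q * E5x + E6x + (ω + 1) * E4x - hx2
  have hCDne : ((a*b + a*c + b*c) * (a*b + a*c + b*c) + (a + b + c) * (a*b*c))
      * ((a + b + c) * (a + b + c) + (a*b + a*c + b*c)) ≠ 0 := mul_ne_zero hCCne hDDne
  have hx1U : x1 ^ (Q + 1) = 1 := by
    have t1 : x1 ^ Q * ((a*b + a*c + b*c) * (a*b + a*c + b*c) + (a + b + c) * (a*b*c))
        = (a*a*c + a*b*b + b*c*c + a*b*c)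
          + ω * ((a + b + c) * (a*b + a*c + b*c) + a*b*c)
          + ((a + b + c) * (a*b + a*c + b*c) + a*b*c) := by
      linear_combination hx1Q + hx1
    apply mul_right_cancel₀ hCDne
    rw [pow_succ, one_mul]
    linear_combination (x1 * ((a + b + c) * (a + b + c) + (a*b + a*c + b*c))) * t1
      + ((a*a*c + a*b*b + b*c*c + a*b*c)
          + ω * ((a + b + c) * (a*b + a*c + b*c) + a*b*c)
          + ((a + b + c) * (a*b + a*c + b*c) + a*b*c)) * hx1
      + hKP
  have hx2U : x2 ^ (Q + 1) = 1 := by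
    have t2 : x2 ^ Q * ((a*b + a*c + b*c) * (a*b + a*c + b*c) + (a + b + c) * (a*b*c))
        = (a*a*c + a*b*b + b*c*c + a*b*c)
          + ω * ((a + b + c) * (a*b + a*c + b*c) + a*b*c) := by
      linear_combination hx2Q + hx2
        + ((a + b + c) * (a*b + a*c + b*c) + a*b*c) * h2
    apply mul_right_cancel₀ hCDne
    rw [pow_succ, one_mul]
    linear_combination (x2 * ((a + b + c) * (a + b + c) + (a*b + a*c + b*c))) * t2
      + ((a*a*c + a*b*b + b*c*c + a*b*c)
          + ω * ((a + b + c) * (a*b + a*c + b*c) + a*b*c)) * hx2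
      + hKP
  -- x1, x2 satisfy the quadratic
  have hq1 : ((a + b + c) * (a + b + c) + (a*b + a*c + b*c)) * x1 ^ 2
      + ((a + b + c) * (a*b + a*c + b*c) + a*b*c) * x1
      + ((a*b + a*c + b*c) * (a*b + a*c + b*c) + (a + b + c) * (a*b*c)) = 0 := by
    have h' : (((a + b + c) * (a + b + c) + (a*b + a*c + b*c)) * x1 ^ 2
        + ((a + b + c) * (a*b + a*c + b*c) + a*b*c) * x1
        + ((a*b + a*c + b*c) * (a*b + a*c + b*c) + (a + b + c) * (a*b*c)))
        * ((a + b + c) * (a + b + c) + (a*b + a*c + b*c)) = 0 := by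
      linear_combination (x1 * ((a + b + c) * (a + b + c) + (a*b + a*c + b*c))
          + (a*a*c + a*b*b + b*c*c + a*b*c)
          + ω * ((a + b + c) * (a*b + a*c + b*c) + a*b*c)
          + ((a + b + c) * (a*b + a*c + b*c) + a*b*c)) * hx1
        + hKP
        + (((a*b + a*c + b*c) * (a*b + a*c + b*c) + (a + b + c) * (a*b*c))
            * ((a + b + c) * (a + b + c) + (a*b + a*c + b*c))) * h2
    exact (mul_eq_zero.mp h').resolve_right hDDne
  have hq2 : ((a + b + c) * (a + b + c) + (a*b + a*c + b*c)) * x2 ^ 2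
      + ((a + b + c) * (a*b + a*c + b*c) + a*b*c) * x2
      + ((a*b + a*c + b*c) * (a*b + a*c + b*c) + (a + b + c) * (a*b*c)) = 0 := by
    have h' : (((a + b + c) * (a + b + c) + (a*b + a*c + b*c)) * x2 ^ 2
        + ((a + b + c) * (a*b + a*c + b*c) + a*b*c) * x2
        + ((a*b + a*c + b*c) * (a*b + a*c + b*c) + (a + b + c) * (a*b*c)))
        * ((a + b + c) * (a + b + c) + (a*b + a*c + b*c)) = 0 := by
      linear_combination (x2 * ((a + b + c) * (a + b + c) + (a*b + a*c + b*c))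
          + (a*a*c + a*b*b + b*c*c + a*b*c)
          + (ω + 1) * ((a + b + c) * (a*b + a*c + b*c) + a*b*c)
          + ((a + b + c) * (a*b + a*c + b*c) + a*b*c)) * hx2
        + hKP
        + (((a*b + a*c + b*c) * (a*b + a*c + b*c) + (a + b + c) * (a*b*c))
            * ((a + b + c) * (a + b + c) + (a*b + a*c + b*c))
          + ((a + b + c) * (a*b + a*c + b*c) + a*b*c)
            * ((a*a*c + a*b*b + b*c*c + a*b*c)
              + (ω + 1) * ((a + b + c) * (a*b + a*c + b*c) + a*b*c))) * h2
    exact (mul_eq_zero.mp h').resolve_right hDDne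
  -- value of the quadratic at the points of E
  have I4 : ∀ u v w : F,
      ((u + v + w) * (u + v + w) + (u*v + u*w + v*w)) * u ^ 2
      + ((u + v + w) * (u*v + u*w + v*w) + u*v*w) * u
      + ((u*v + u*w + v*w) * (u*v + u*w + v*w) + (u + v + w) * (u*v*w))
      = ((u + v) * (u + w)) ^ 2 := fun u v w => by
    linear_combination (u*v*w^2 + u*v^2*w + u^2*w^2 + 3*u^2*v*w + u^2*v^2 + u^3*w + u^3*v) * h2
  have hroot_ne : ∀ z : F,
      ((a + b + c) * (a + b + c) + (a*b + a*c + b*c)) * z ^ 2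
      + ((a + b + c) * (a*b + a*c + b*c) + a*b*c) * z
      + ((a*b + a*c + b*c) * (a*b + a*c + b*c) + (a + b + c) * (a*b*c)) = 0 →
      z ≠ a ∧ z ≠ b ∧ z ≠ c := by
    intro z hz
    refine ⟨?_, ?_, ?_⟩
    · intro h
      rw [h] at hz
      have h0 : ((a + b) * (a + c)) ^ 2 = 0 := by linear_combination hz - I4 a b c
      exact pow_ne_zero 2 (mul_ne_zero (hsum_ne a b hab) (hsum_ne a c hac)) h0
    · intro h
      rw [h] at hz
      have h0 : ((b + a) * (b + c)) ^ 2 = 0 := by linear_combination hz - I4 b a c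
      exact pow_ne_zero 2
        (mul_ne_zero (hsum_ne b a (Ne.symm hab)) (hsum_ne b c hbc)) h0
    · intro h
      rw [h] at hz
      have h0 : ((c + a) * (c + b)) ^ 2 = 0 := by linear_combination hz - I4 c a b
      exact pow_ne_zero 2
        (mul_ne_zero (hsum_ne c a (Ne.symm hac)) (hsum_ne c b (Ne.symm hbc))) h0
  obtain ⟨hx1a, hx1b, hx1c⟩ := hroot_ne x1 hq1
  obtain ⟨hx2a, hx2b, hx2c⟩ := hroot_ne x2 hq2
  -- the candidate block
  have hB0card : ({a, b, c, x1, x2} : Finset F).card = 5 := by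
    rw [Finset.card_insert_of_notMem (by simp [hab, hac, hx1a.symm, hx2a.symm]),
      Finset.card_insert_of_notMem (by simp [hbc, hx1b.symm, hx2b.symm]),
      Finset.card_insert_of_notMem (by simp [hx1c.symm, hx2c.symm]),
      Finset.card_pair hx1x2ne]
  have hB0esym : esym ({a, b, c, x1, x2} : Finset F) 2 = 0 := by
    rw [esym_five a b c x1 x2 hab hac (Ne.symm hx1a) (Ne.symm hx2a)
      hbc (Ne.symm hx1b) (Ne.symm hx2b) (Ne.symm hx1c) (Ne.symm hx2c) hx1x2ne]
    have hz : (x1 * x2 + c * (x1 + x2) + b * (c + x1 + x2) + a * (b + c + x1 + x2))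
        * ((a + b + c) * (a + b + c) + (a*b + a*c + b*c)) = 0 := by
      linear_combination (a + b + c) * hsum12 + hprod12
        + (b*c^3 + 3*b^2*c^2 + b^3*c + a*c^3 + 8*a*b*c^2 + 8*a*b^2*c + a*b^3 + 3*a^2*c^2 + 8*a^2*b*c + 3*a^2*b^2 + a^3*c + a^3*b) * h2
    exact (mul_eq_zero.mp hz).resolve_right hDDne
  have hB0sub : ↑({a, b, c, x1, x2} : Finset F) ⊆ rootsSet F (Q + 1) := by
    intro z hz
    simp only [Finset.coe_insert, Set.mem_insert_iff, Finset.coe_pair,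
      Finset.mem_coe, Finset.mem_insert, Finset.mem_singleton] at hz
    show z ^ (Q + 1) = 1
    rcases hz with rfl | rfl | rfl | rfl | rfl
    exacts [haU, hbU, hcU, hx1U, hx2U]
  have hEB0 : E ⊆ ({a, b, c, x1, x2} : Finset F) := by
    rw [hE3]
    intro z hz
    simp only [Finset.mem_insert, Finset.mem_singleton] at hz ⊢
    rcases hz with rfl | rfl | rfl
    · exact Or.inl rfl
    · exact Or.inr (Or.inl rfl)
    · exact Or.inr (Or.inr (Or.inl rfl))
  -- now prove the set is exactly {B0}
  have hset : {B : Finset F | ↑B ⊆ rootsSet F (Q + 1) ∧ B.card = 5 ∧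
      esym B 2 = 0 ∧ E ⊆ B} = {({a, b, c, x1, x2} : Finset F)} := by
    apply Set.eq_singleton_iff_unique_mem.mpr
    constructor
    · exact ⟨hB0sub, hB0card, hB0esym, hEB0⟩
    · rintro B' ⟨hB'U, hB'card, hB'esym, hEB'⟩
      -- extract the two extra points
      have hsd : (B' \ E).card = 2 := by
        rw [Finset.card_sdiff_of_subset hEB', hB'card, hE]
      obtain ⟨x, y, hxy, hxyeq⟩ := Finset.card_eq_two.mp hsd
      have hxB' : x ∈ B' := (Finset.mem_sdiff.mp (hxyeq ▸ Finset.mem_insert_self x {y})).1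
      have hxE : x ∉ E := (Finset.mem_sdiff.mp (hxyeq ▸ Finset.mem_insert_self x {y})).2
      have hyB' : y ∈ B' :=
        (Finset.mem_sdiff.mp (hxyeq ▸ Finset.mem_insert_of_mem (Finset.mem_singleton_self y))).1
      have hyE : y ∉ E :=
        (Finset.mem_sdiff.mp (hxyeq ▸ Finset.mem_insert_of_mem (Finset.mem_singleton_self y))).2
      have hxU : x ^ (Q + 1) = 1 := hB'U (Finset.mem_coe.mpr hxB')
      have hyU : y ^ (Q + 1) = 1 := hB'U (Finset.mem_coe.mpr hyB')
      have hx0 : x ≠ 0 := hne0 x hxU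
      have hy0 : y ≠ 0 := hne0 y hyU
      have hX : x ^ Q * x = 1 := by rw [← pow_succ]; exact hxU
      have hY : y ^ Q * y = 1 := by rw [← pow_succ]; exact hyU
      have hax : a ≠ x := fun h => hxE (h ▸ (hE3 ▸ (by simp : a ∈ ({a,b,c} : Finset F))))
      have hay : a ≠ y := fun h => hyE (h ▸ (hE3 ▸ (by simp : a ∈ ({a,b,c} : Finset F))))
      have hbx : b ≠ x := fun h => hxE (h ▸ (hE3 ▸ (by simp : b ∈ ({a,b,c} : Finset F))))
      have hby : b ≠ y := fun h => hyE (h ▸ (hE3 ▸ (by simp : b ∈ ({a,b,c} : Finset F))))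
      have hcx : c ≠ x := fun h => hxE (h ▸ (hE3 ▸ (by simp : c ∈ ({a,b,c} : Finset F))))
      have hcy : c ≠ y := fun h => hyE (h ▸ (hE3 ▸ (by simp : c ∈ ({a,b,c} : Finset F))))
      have hB'eq : B' = ({a, b, c, x, y} : Finset F) := by
        have h1 : B' = E ∪ (B' \ E) := (Finset.union_sdiff_of_subset hEB').symm
        rw [h1, hxyeq, hE3]
        ext z
        simp only [Finset.mem_union, Finset.mem_insert, Finset.mem_singleton, or_assoc]
      have hR1 : x * y + c * (x + y) + b * (c + x + y) + a * (b + c + x + y) = 0 := by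
        rw [hB'eq] at hB'esym
        rw [esym_five a b c x y hab hac hax hay hbc hbx hby hcx hcy hxy] at hB'esym
        exact hB'esym
      -- Frobenius image of the relation
      have h6 : (x * y + c * (x + y) + b * (c + x + y) + a * (b + c + x + y)) ^ Q
          = 0 ^ Q := by rw [hR1]
      rw [zero_pow hQ0] at h6
      simp only [hfrob, mul_pow] at h6
      have hR2 : (a + b + c) * (x * y) + (a*b + a*c + b*c) * (x + y) + a*b*c = 0 := by
        linear_combination (x*y*(a*b*c)) * h6
          + (- b*c*x*y*(y^Q) - b*c*x*y*(x^Q) - b*c*(c^Q)*x*y - b*c*(b^Q)*x*y)*hA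
          + (- c*x*y - a*c*x*y*(y^Q) - a*c*x*y*(x^Q) - a*c*(c^Q)*x*y)*hB
          + (- b*x*y - a*x*y - a*b*x*y*(y^Q) - a*b*x*y*(x^Q))*hC
          + (- b*c*y - a*c*y - a*b*y - a*b*c*y*(y^Q))*hX
          + (- b*c*x - a*c*x - a*b*x - a*b*c)*hY
      have hsumXY : ((a + b + c) * (a + b + c) + (a*b + a*c + b*c)) * (x + y)
          = (a + b + c) * (a*b + a*c + b*c) + a*b*c := by
        linear_combination (a + b + c) * hR1 - hR2
          + ((a*b + a*c + b*c) * (x + y) - (a + b + c) * (a*b + a*c + b*c)) * h2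
      have hprodXY : ((a + b + c) * (a + b + c) + (a*b + a*c + b*c)) * (x * y)
          = (a*b + a*c + b*c) * (a*b + a*c + b*c) + (a + b + c) * (a*b*c) := by
        linear_combination (a*b + a*c + b*c) * hR1 - (a + b + c) * hR2
          + ((a + b + c) ^ 2 * (x * y) - (a*b + a*c + b*c) ^ 2) * h2
      have quadx : ((a + b + c) * (a + b + c) + (a*b + a*c + b*c)) * x ^ 2
          + ((a + b + c) * (a*b + a*c + b*c) + a*b*c) * x
          + ((a*b + a*c + b*c) * (a*b + a*c + b*c) + (a + b + c) * (a*b*c)) = 0 := by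
        linear_combination (-x) * hsumXY - hprodXY
          + (((a + b + c) * (a + b + c) + (a*b + a*c + b*c)) * (x^2 + x*y)) * h2
      have quady : ((a + b + c) * (a + b + c) + (a*b + a*c + b*c)) * y ^ 2
          + ((a + b + c) * (a*b + a*c + b*c) + a*b*c) * y
          + ((a*b + a*c + b*c) * (a*b + a*c + b*c) + (a + b + c) * (a*b*c)) = 0 := by
        linear_combination (-y) * hsumXY - hprodXY
          + (((a + b + c) * (a + b + c) + (a*b + a*c + b*c)) * (y^2 + x*y)) * h2
      have factu : ∀ z : F,
          ((a + b + c) * (a + b + c) + (a*b + a*c + b*c)) * z ^ 2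
          + ((a + b + c) * (a*b + a*c + b*c) + a*b*c) * z
          + ((a*b + a*c + b*c) * (a*b + a*c + b*c) + (a + b + c) * (a*b*c)) = 0 →
          z = x1 ∨ z = x2 := by
        intro z hz
        have h' : ((z + x1) * (z + x2))
            * ((a + b + c) * (a + b + c) + (a*b + a*c + b*c)) = 0 := by
          linear_combination hz + z * hsum12 + hprod12
        have h'' := (mul_eq_zero.mp h').resolve_right hDDne
        rcases mul_eq_zero.mp h'' with h | h
        · exact Or.inl (by linear_combination h - x1 * h2)
        · exact Or.inr (by linear_combination h - x2 * h2)
      have hxc := factu x quadx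
      have hyc := factu y quady
      have hpair : ({x, y} : Finset F) = {x1, x2} := by
        rcases hxc with rfl | rfl
        · rcases hyc with rfl | rfl
          · exact absurd rfl hxy
          · rfl
        · rcases hyc with rfl | rfl
          · exact Finset.pair_comm x y
          · exact absurd rfl hxy
      rw [hB'eq]
      rw [show ({a, b, c, x, y} : Finset F) = insert a (insert b (insert c ({x, y}))) from rfl,
        hpair]
  rw [hset, Set.ncard_singleton]

theorem stmt7 (m : ℕ) (hm : 4 ≤ m) (heven : Even m)
    (E : Finset (GaloisField 2 (2 * m)))
    (hEU : ↑E ⊆ rootsSet (GaloisField 2 (2 * m)) (2 ^ m + 1))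
    (hE : E.card = 3) :
    {B : Finset (GaloisField 2 (2 * m)) |
        ↑B ⊆ rootsSet (GaloisField 2 (2 * m)) (2 ^ m + 1) ∧ B.card = 5 ∧
          esym B 2 = 0 ∧ E ⊆ B}.ncard = 1 := by
  haveI : Fact (Nat.Prime 2) := ⟨Nat.prime_two⟩
  haveI : Fintype (GaloisField 2 (2 * m)) := Fintype.ofFinite _
  have hcard : Fintype.card (GaloisField 2 (2 * m)) = 2 ^ (2 * m) := by
    rw [← Nat.card_eq_fintype_card]
    exact GaloisField.card 2 (2 * m) (by omega)
  exact steiner_key (GaloisField 2 (2 * m)) m hm heven hcard E hEU hE
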